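/- (Lemma 2.1, fusion.) Let F be a filter on ℕ containing every cofinite set with ∅ ∉ F and I its dual ideal; assume I satisfies the P-property and fatness, and fix a tree T₀ on ℕ with T₀ ∈ I which is order-isomorphic to the full binary tree of height ω. Let Q be the countable product forcing defined from T₀ and I. Then for every decreasing sequence p_0 ≥ p_1 ≥ p_2 ≥ … of conditions in Q there exist q ∈ Q and an infinite set Z ⊆ ℕ such that q ≤ p_n^{(n)} for every n ∈ Z. -/

import Mathlib

/-- A tree on `ℕ`: `r` is a partial order supported on `T` whose predecessor sets
are linearly ordered and such that `r i j` implies `i ≤ j` in `ℕ`. -/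
def IsTreeOn (T : Set ℕ) (r : ℕ → ℕ → Prop) : Prop :=
  (∀ i j, r i j → i ∈ T ∧ j ∈ T) ∧
  (∀ i ∈ T, r i i) ∧
  (∀ i j, r i j → r j i → i = j) ∧
  (∀ i j k, r i j → r j k → r i k) ∧
  (∀ i ∈ T, ∀ j k, r j i → r k i → r j k ∨ r k j) ∧
  (∀ i j, r i j → i ≤ j)

/-- A chain of `(T, r)`. -/
def IsChainIn (T : Set ℕ) (r : ℕ → ℕ → Prop) (C : Set ℕ) : Prop :=
  C ⊆ T ∧ ∀ x ∈ C, ∀ y ∈ C, r x y ∨ r y x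

/-- A branch of `(T, r)`: a maximal chain. -/
def IsBranch (T : Set ℕ) (r : ℕ → ℕ → Prop) (B : Set ℕ) : Prop :=
  IsChainIn T r B ∧ ∀ C, IsChainIn T r C → B ⊆ C → C = B

/-- The restriction of a relation to a set. -/
def restrictRel (r : ℕ → ℕ → Prop) (S : Set ℕ) : ℕ → ℕ → Prop :=
  fun i j => r i j ∧ i ∈ S ∧ j ∈ S

/-- `T ≤_t S`: `(S, rS)` is a subordering of `(T, rT)` and every branch of `T`
contains cofinally a branch of `S`. -/
def TreeLe (T : Set ℕ) (rT : ℕ → ℕ → Prop) (S : Set ℕ) (rS : ℕ → ℕ → Prop) : Prop :=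
  S ⊆ T ∧ (∀ i j, rS i j ↔ restrictRel rT S i j) ∧
  ∀ B, IsBranch T rT B → ∃ b, IsBranch S rS b ∧ b ⊆ B ∧ ∀ x ∈ B, ∃ y ∈ b, rT x y

/-- `T₀` with the numbers `≤ n` deleted. -/
def treeCut (T : Set ℕ) (n : ℕ) : Set ℕ := T ∩ Set.Ioi n

/-- A condition of the countable product forcing `Q = Pᵒᵐᵉᵍᵃ`: a sequence of
coordinates, each consisting of a tree `T i` with its order `r i` and a partial 0-1
function `f i` (with `f i j = none` meaning `j ∉ dm (f i)`). -/
structure QCond where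
  T : ℕ → Set ℕ
  r : ℕ → ℕ → ℕ → Prop
  f : ℕ → ℕ → Option Bool

/-- Validity of a `Q`-condition with respect to the dual ideal of `F` and the base
binary tree `(T₀, r₀)`: each coordinate `⟨T i, r i, f i⟩` is a member of `P`, i.e.
`T i` is a tree lying in the dual ideal `I = {A | Aᶜ ∈ F}` with
`T i ≤_t T₀⁽ⁿ⁾` for some `n` (so `T i ∈ 𝒯`), and `f i` is a 0-1 function whose
domain is exactly `T i`. -/
def QCond.valid (F : Filter ℕ) (T₀ : Set ℕ) (r₀ : ℕ → ℕ → Prop) (q : QCond) : Prop :=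
  ∀ i : ℕ,
    IsTreeOn (q.T i) (q.r i) ∧
    (q.T i)ᶜ ∈ F ∧
    (∃ n : ℕ, TreeLe (q.T i) (q.r i) (treeCut T₀ n) (restrictRel r₀ (treeCut T₀ n))) ∧
    (∀ j : ℕ, (q.f i j).isSome ↔ j ∈ q.T i)

/-- The coordinatewise ordering of `Q`: `q ≤ p` iff in every coordinate the tree of
`q` is `≤_t` the tree of `p` and the function of `q` extends the function of `p`. -/
def QCond.le (q p : QCond) : Prop :=
  ∀ i : ℕ, TreeLe (q.T i) (q.r i) (p.T i) (p.r i) ∧ ∀ j ∈ p.T i, q.f i j = p.f i j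

/-- `q⁽ⁿ⁾`: the first `n` coordinates of `q` are restricted to their trees with the
numbers `≤ n` deleted; the remaining coordinates are unchanged. -/
def QCond.res (q : QCond) (n : ℕ) : QCond where
  T := fun i => if i < n then treeCut (q.T i) n else q.T i
  r := fun i => if i < n then restrictRel (q.r i) (treeCut (q.T i) n) else q.r i
  f := fun i j => if i < n ∧ j ≤ n then none else q.f i j

lemma exists_branch_through {T : Set ℕ} {r : ℕ → ℕ → Prop} (C : Set ℕ)
    (hC : IsChainIn T r C) : ∃ B, IsBranch T r B ∧ C ⊆ B := by
  have H : ∀ c ⊆ {D | IsChainIn T r D ∧ C ⊆ D}, IsChain (· ⊆ ·) c → c.Nonempty →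
      ∃ ub ∈ {D | IsChainIn T r D ∧ C ⊆ D}, ∀ s ∈ c, s ⊆ ub := by
    rintro c hcS hchain ⟨D0, hD0⟩
    refine ⟨⋃₀ c, ⟨⟨?_, ?_⟩, ?_⟩, fun s hs => Set.subset_sUnion_of_mem hs⟩
    · rintro x ⟨D, hD, hxD⟩
      exact (hcS hD).1.1 hxD
    · rintro x ⟨D1, hD1, hx⟩ y ⟨D2, hD2, hy⟩
      rcases eq_or_ne D1 D2 with rfl | hne
      · exact (hcS hD1).1.2 x hx y hy
      rcases hchain hD1 hD2 hne with h | h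
      · exact (hcS hD2).1.2 x (h hx) y hy
      · exact (hcS hD1).1.2 x hx y (h hy)
    · exact (hcS hD0).2.trans (Set.subset_sUnion_of_mem hD0)
  obtain ⟨m, hCm, hmax⟩ :=
    zorn_subset_nonempty {D | IsChainIn T r D ∧ C ⊆ D} H C ⟨hC, subset_rfl⟩
  refine ⟨m, ⟨hmax.1.1, fun C' hC' hsub => ?_⟩, hCm⟩
  exact Set.Subset.antisymm (hmax.2 ⟨hC', hCm.trans hsub⟩ hsub) hsub

lemma finite_boolLists (n : ℕ) : {l : List Bool | l.length ≤ n}.Finite := by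
  induction n with
  | zero =>
    refine Set.Finite.subset (Set.finite_singleton ([] : List Bool)) ?_
    intro l hl
    simp only [Set.mem_setOf_eq, Nat.le_zero, List.length_eq_zero_iff] at hl
    simp [hl]
  | succ n ih =>
    have hsub : {l : List Bool | l.length ≤ n + 1} ⊆
        insert ([] : List Bool) ((fun l => true :: l) '' {l | l.length ≤ n} ∪
          (fun l => false :: l) '' {l | l.length ≤ n}) := by
      intro l hl
      match l with
      | [] => exact Set.mem_insert _ _
      | b :: t =>
        have ht : t.length ≤ n := by simpa using hl
        cases b
        · exact Set.mem_insert_of_mem _ (Or.inr ⟨t, ht, rfl⟩)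
        · exact Set.mem_insert_of_mem _ (Or.inl ⟨t, ht, rfl⟩)
    exact Set.Finite.subset (((ih.image _).union (ih.image _)).insert _) hsub

lemma t0_extend {T₀ : Set ℕ} {r₀ : ℕ → ℕ → Prop} {g : ℕ → List Bool}
    (hg : Set.BijOn g T₀ Set.univ)
    (hord : ∀ i ∈ T₀, ∀ j ∈ T₀, (r₀ i j ↔ g i <+: g j)) :
    ∀ t ∈ T₀, ∀ γ : ℕ, ∃ v, v ∈ T₀ ∧ r₀ t v ∧ γ < v := by
  intro t ht γ
  have hsurj : ∀ σ : List Bool, ∃ v ∈ T₀, g v = σ := fun σ => hg.2.2 (Set.mem_univ σ)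
  choose vf hvfT hvfg using hsurj
  have hmem : ∀ k : ℕ, vf (g t ++ List.replicate k true) ∈ {w | w ∈ T₀ ∧ r₀ t w} := by
    intro k
    refine ⟨hvfT _, (hord t ht _ (hvfT _)).mpr ?_⟩
    rw [hvfg]
    exact List.prefix_append _ _
  have hinj : Function.Injective (fun k : ℕ => vf (g t ++ List.replicate k true)) := by
    intro k k' h
    have h1 := hvfg (g t ++ List.replicate k true)
    have h2 := hvfg (g t ++ List.replicate k' true)
    rw [show vf (g t ++ List.replicate k true) = vf (g t ++ List.replicate k' true) from h] at h1
    have h3 := h1.symm.trans h2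
    have h4 := congrArg List.length h3
    simpa using h4
  have hEinf : {w | w ∈ T₀ ∧ r₀ t w}.Infinite :=
    Set.infinite_of_injective_forall_mem hinj hmem
  by_contra hcon
  push_neg at hcon
  exact hEinf ((Set.finite_Iic γ).subset (fun w hw => hcon w hw.1 hw.2))

lemma cut_branch_unbounded {T₀ : Set ℕ} {r₀ : ℕ → ℕ → Prop}
    (hT₀ : IsTreeOn T₀ r₀) {g : ℕ → List Bool}
    (hg : Set.BijOn g T₀ Set.univ)
    (hord : ∀ i ∈ T₀, ∀ j ∈ T₀, (r₀ i j ↔ g i <+: g j))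
    (K : ℕ) (B : Set ℕ)
    (hB : IsBranch (treeCut T₀ K) (restrictRel r₀ (treeCut T₀ K)) B)
    (β : ℕ) : ∃ y ∈ B, β < y := by
  by_contra hcon
  push_neg at hcon
  rcases B.eq_empty_or_nonempty with hBe | hBne
  · obtain ⟨t0, ht0T, -⟩ := hg.2.2 (Set.mem_univ ([] : List Bool))
    obtain ⟨v, hvT, -, hv⟩ := t0_extend hg hord t0 ht0T K
    have hvcut : v ∈ treeCut T₀ K := ⟨hvT, hv⟩
    have hchain : IsChainIn (treeCut T₀ K) (restrictRel r₀ (treeCut T₀ K)) {v} := by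
      constructor
      · exact Set.singleton_subset_iff.mpr hvcut
      · intro x hx y hy
        rw [Set.mem_singleton_iff] at hx hy
        rw [hx, hy]
        exact Or.inl ⟨hT₀.2.1 v hvT, hvcut, hvcut⟩
    have heq := hB.2 {v} hchain (hBe ▸ Set.empty_subset _)
    have : v ∈ B := heq ▸ Set.mem_singleton v
    rw [hBe] at this
    exact absurd this (Set.notMem_empty v)
  · obtain ⟨t, htB, hmax⟩ := Set.Finite.exists_maximalFor id B
      ((Set.finite_Iic β).subset (fun y hy => hcon y hy)) hBne
    have htcut : t ∈ treeCut T₀ K := hB.1.1 htB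
    obtain ⟨v, hvT, hrtv, hv⟩ := t0_extend hg hord t htcut.1 (max β K)
    have hvcut : v ∈ treeCut T₀ K := ⟨hvT, lt_of_le_of_lt (le_max_right β K) hv⟩
    have hyv : ∀ y ∈ B, restrictRel r₀ (treeCut T₀ K) y v := by
      intro y hy
      have hyt : r₀ y t := by
        rcases hB.1.2 y hy t htB with h | h
        · exact h.1
        · have : t = y := le_antisymm (hT₀.2.2.2.2.2 t y h.1) (hmax hy (hT₀.2.2.2.2.2 t y h.1))
          rw [← this]
          exact hT₀.2.1 t htcut.1
      exact ⟨hT₀.2.2.2.1 y t v hyt hrtv, hB.1.1 hy, hvcut⟩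
    have hchain : IsChainIn (treeCut T₀ K) (restrictRel r₀ (treeCut T₀ K)) (insert v B) := by
      constructor
      · intro x hx
        rcases Set.mem_insert_iff.mp hx with hxv | hxB
        · rw [hxv]; exact hvcut
        · exact hB.1.1 hxB
      · intro x hx y hy
        rcases Set.mem_insert_iff.mp hx with hxv | hxB
        · rcases Set.mem_insert_iff.mp hy with hyv' | hyB
          · rw [hxv, hyv']
            exact Or.inl ⟨hT₀.2.1 v hvT, hvcut, hvcut⟩
          · rw [hxv]; exact Or.inr (hyv y hyB)
        · rcases Set.mem_insert_iff.mp hy with hyv' | hyB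
          · rw [hyv']; exact Or.inl (hyv x hxB)
          · exact hB.1.2 x hxB y hyB
    have heq := hB.2 _ hchain (Set.subset_insert v B)
    have hvB : v ∈ B := heq ▸ Set.mem_insert v B
    have := hcon v hvB
    have := le_max_left β K
    omega

/-- The tree of coordinate `i` of `(p n)⁽ⁿ⁾`. -/
def fusionPart (p : ℕ → QCond) (n i : ℕ) : Set ℕ := ((p n).res n).T i

/-- The fused tree at coordinate `i`: union of the restricted trees over `Z`. -/
def fusionU (p : ℕ → QCond) (Z : Set ℕ) (i : ℕ) : Set ℕ :=
  {j | ∃ n, n ∈ Z ∧ j ∈ fusionPart p n i}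

/-- The fused tree order at coordinate `i`. -/
def fusionR (p : ℕ → QCond) (Z : Set ℕ) (i : ℕ) (x y : ℕ) : Prop :=
  x ∈ fusionU p Z i ∧ y ∈ fusionU p Z i ∧ ∃ m, (p m).r i x y

open Classical in
/-- The fused 0-1 function at coordinate `i`. -/
noncomputable def fusionF (p : ℕ → QCond) (Z : Set ℕ) (i j : ℕ) : Option Bool :=
  if h : ∃ n, n ∈ Z ∧ j ∈ fusionPart p n i then (p h.choose).f i j else none

/-- The fusion condition. -/
noncomputable def fusionQ (p : ℕ → QCond) (Z : Set ℕ) : QCond :=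
  ⟨fusionU p Z, fusionR p Z, fusionF p Z⟩

/-- Lemma 2.1, fusion: assume the dual ideal `I = {A | Aᶜ ∈ F}` of
`F` has the P-property and is fat, and fix a tree `T₀ ∈ I` order-isomorphic to the
full binary tree of height `ω`.  Then for every decreasing sequence
`p 0 ≥ p 1 ≥ …` of conditions of `Q` there are a condition `q` and an infinite
`Z ⊆ ℕ` with `q ≤ (p n)⁽ⁿ⁾` for every `n ∈ Z`. -/
theorem fusion_lemma (F : Filter ℕ)
    (hcof : Filter.cofinite ≤ F) (hbot : (∅ : Set ℕ) ∉ F)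
    (hP : ∀ A : ℕ → Set ℕ, (∀ n, (A n)ᶜ ∈ F) →
      ∃ B : Set ℕ, Bᶜ ∈ F ∧ ∀ n, (A n \ B).Finite)
    (hfat : ∀ A : ℕ → Set ℕ, (∀ n, (A n)ᶜ ∈ F) →
      (∀ k : ℕ, {n : ℕ | (A n ∩ Set.Iic k).Nonempty}.Finite) →
      ∃ Z : Set ℕ, Z.Infinite ∧ (⋃ n ∈ Z, A n)ᶜ ∈ F)
    (T₀ : Set ℕ) (r₀ : ℕ → ℕ → Prop) (hT₀ : IsTreeOn T₀ r₀) (hT₀I : T₀ᶜ ∈ F)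
    (hiso : ∃ g : ℕ → List Bool, Set.BijOn g T₀ Set.univ ∧
      ∀ i ∈ T₀, ∀ j ∈ T₀, (r₀ i j ↔ g i <+: g j))
    (p : ℕ → QCond) (hvalid : ∀ n, (p n).valid F T₀ r₀)
    (hdec : ∀ n : ℕ, (p (n + 1)).le (p n)) :
    ∃ q : QCond, q.valid F T₀ r₀ ∧
      ∃ Z : Set ℕ, Z.Infinite ∧ ∀ n ∈ Z, q.le ((p n).res n) := by
  classical
  obtain ⟨g, hg, hord⟩ := hiso
  have hTree : ∀ n i, IsTreeOn ((p n).T i) ((p n).r i) := fun n i => (hvalid n i).1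
  -- monotonicity along the decreasing sequence
  have hmonoT : ∀ i n m, n ≤ m → (p n).T i ⊆ (p m).T i := by
    intro i n m h
    induction m, h using Nat.le_induction with
    | base => exact subset_rfl
    | succ m hm ih => exact ih.trans (hdec m i).1.1
  have hmonoR : ∀ i n m, n ≤ m → ∀ x y, (p n).r i x y → (p m).r i x y := by
    intro i n m h
    induction m, h using Nat.le_induction with
    | base => exact fun x y hxy => hxy
    | succ m hm ih => exact fun x y hxy => (((hdec m i).1.2.1 x y).mp (ih x y hxy)).1
  have hrestr : ∀ i n m, n ≤ m → ∀ x y, (p m).r i x y →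
      x ∈ (p n).T i → y ∈ (p n).T i → (p n).r i x y := by
    intro i n m h
    induction m, h using Nat.le_induction with
    | base => exact fun x y hxy _ _ => hxy
    | succ m hm ih =>
      intro x y hxy hx hy
      exact ih x y (((hdec m i).1.2.1 x y).mpr
        ⟨hxy, hmonoT i n m hm hx, hmonoT i n m hm hy⟩) hx hy
  have hmonoF : ∀ i n m, n ≤ m → ∀ j, j ∈ (p n).T i → (p m).f i j = (p n).f i j := by
    intro i n m h
    induction m, h using Nat.le_induction with
    | base => exact fun j _ => rfl
    | succ m hm ih =>
      intro j hj
      exact ((hdec m i).2 j (hmonoT i n m hm hj)).trans (ih j hj)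
  -- facts about the "big" order ∃ m, (p m).r i x y
  have hRb_restrict : ∀ i n x y, (∃ m, (p m).r i x y) →
      x ∈ (p n).T i → y ∈ (p n).T i → (p n).r i x y := by
    rintro i n x y ⟨m, hm⟩ hx hy
    rcases le_total m n with h | h
    · exact hmonoR i m n h x y hm
    · exact hrestr i n m h x y hm hx hy
  have hRb_le : ∀ i x y, (∃ m, (p m).r i x y) → x ≤ y := by
    rintro i x y ⟨m, hm⟩
    exact (hTree m i).2.2.2.2.2 x y hm
  have hRb_trans : ∀ i x y z, (∃ m, (p m).r i x y) → (∃ m, (p m).r i y z) →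
      ∃ m, (p m).r i x z := by
    rintro i x y z ⟨m1, h1⟩ ⟨m2, h2⟩
    exact ⟨max m1 m2, (hTree _ i).2.2.2.1 x y z
      (hmonoR i m1 _ (le_max_left _ _) x y h1) (hmonoR i m2 _ (le_max_right _ _) y z h2)⟩
  have hRb_linear : ∀ i u v x, (∃ m, (p m).r i u x) → (∃ m, (p m).r i v x) →
      (∃ m, (p m).r i u v) ∨ (∃ m, (p m).r i v u) := by
    rintro i u v x ⟨m1, h1⟩ ⟨m2, h2⟩
    have h1' := hmonoR i m1 (max m1 m2) (le_max_left _ _) u x h1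
    have h2' := hmonoR i m2 (max m1 m2) (le_max_right _ _) v x h2
    have hx : x ∈ (p (max m1 m2)).T i := ((hTree _ i).1 u x h1').2
    rcases (hTree (max m1 m2) i).2.2.2.2.1 x hx u v h1' h2' with h | h
    · exact Or.inl ⟨_, h⟩
    · exact Or.inr ⟨_, h⟩
  -- apply fatness
  set A : ℕ → Set ℕ := fun n => ⋃ i ∈ Set.Iio n, treeCut ((p n).T i) n with hA
  have hAsmall : ∀ n, (A n)ᶜ ∈ F := by
    intro n
    simp only [hA]
    rw [Set.compl_iUnion₂]
    refine (Filter.biInter_mem (Set.finite_Iio n)).mpr (fun i _ => ?_)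
    exact Filter.mem_of_superset (hvalid n i).2.1
      (Set.compl_subset_compl.mpr Set.inter_subset_left)
  have hAmin : ∀ k, {n | (A n ∩ Set.Iic k).Nonempty}.Finite := by
    intro k
    refine (Set.finite_Iio k).subset ?_
    rintro n ⟨j, hjA, hjk⟩
    simp only [hA] at hjA
    obtain ⟨i, hi, hj⟩ := Set.mem_iUnion₂.mp hjA
    exact lt_of_lt_of_le hj.2 (Set.mem_Iic.mp hjk)
  obtain ⟨Z, hZinf, hZsmall⟩ := hfat A hAsmall hAmin
  -- basic facts about the parts and the union
  have hpart_def : ∀ n i, fusionPart p n i =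
      if i < n then treeCut ((p n).T i) n else (p n).T i := fun n i => rfl
  have hpart_tree : ∀ n i, fusionPart p n i ⊆ (p n).T i := by
    intro n i
    rw [hpart_def]
    split
    · exact Set.inter_subset_left
    · exact subset_rfl
  have hUtree : ∀ i x, x ∈ fusionU p Z i → ∃ n, n ∈ Z ∧ x ∈ (p n).T i := by
    rintro i x ⟨n, hnZ, hx⟩
    exact ⟨n, hnZ, hpart_tree n i hx⟩
  have hqtree : ∀ i, IsTreeOn (fusionU p Z i) (fusionR p Z i) := by
    intro i
    refine ⟨fun x y h => ⟨h.1, h.2.1⟩, ?_, ?_, ?_, ?_, ?_⟩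
    · intro x hx
      obtain ⟨n, hnZ, hxT⟩ := hUtree i x hx
      exact ⟨hx, hx, n, (hTree n i).2.1 x hxT⟩
    · intro x y h h'
      exact le_antisymm (hRb_le i x y h.2.2) (hRb_le i y x h'.2.2)
    · intro x y z h h'
      exact ⟨h.1, h'.2.1, hRb_trans i x y z h.2.2 h'.2.2⟩
    · intro x hx j k hj hk
      rcases hRb_linear i j k x hj.2.2 hk.2.2 with h | h
      · exact Or.inl ⟨hj.1, hk.1, h⟩
      · exact Or.inr ⟨hk.1, hj.1, h⟩
    · exact fun x y h => hRb_le i x y h.2.2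
  -- a fixed element of Z and the induced T₀-tails
  obtain ⟨nh, hnhZ⟩ := hZinf.nonempty
  choose Kn hKnspec using fun n i => (hvalid n i).2.2.1
  have hT₀part : ∀ n i, ∀ w, w ∈ T₀ → max (Kn n i) n < w → w ∈ fusionPart p n i := by
    intro n i w hwT hw
    have hw1 : w ∈ treeCut T₀ (Kn n i) := ⟨hwT, lt_of_le_of_lt (le_max_left _ _) hw⟩
    have hw2 : w ∈ (p n).T i := (hKnspec n i).1 hw1
    rw [hpart_def]
    split
    · exact ⟨hw2, lt_of_le_of_lt (le_max_right _ _) hw⟩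
    · exact hw2
  set Kf : ℕ → ℕ := fun i => max (Kn nh i) nh with hKf
  have hT₀U : ∀ i w, w ∈ T₀ → Kf i < w → w ∈ fusionU p Z i := by
    intro i w hwT hw
    exact ⟨nh, hnhZ, hT₀part nh i w hwT hw⟩
  have htransf : ∀ i x y, x ∈ T₀ → y ∈ T₀ → Kn nh i < x → Kn nh i < y →
      (r₀ x y ↔ (p nh).r i x y) := by
    intro i x y hx hy hxK hyK
    have hxc : x ∈ treeCut T₀ (Kn nh i) := ⟨hx, hxK⟩
    have hyc : y ∈ treeCut T₀ (Kn nh i) := ⟨hy, hyK⟩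
    constructor
    · intro h
      exact (((hKnspec nh i).2.1 x y).mp ⟨h, hxc, hyc⟩).1
    · intro h
      exact (((hKnspec nh i).2.1 x y).mpr ⟨h, hxc, hyc⟩).1
  -- above every element of any (p n)-tree there are arbitrarily large T₀-nodes
  have hEXT : ∀ n i t, t ∈ (p n).T i → ∀ γ : ℕ,
      ∃ w, w ∈ T₀ ∧ γ < w ∧ ∃ m, (p m).r i t w := by
    intro n i t ht γ
    have hchain : IsChainIn ((p n).T i) ((p n).r i) {t} := by
      constructor
      · exact Set.singleton_subset_iff.mpr ht
      · intro x hx y hy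
        rw [Set.mem_singleton_iff] at hx hy
        rw [hx, hy]
        exact Or.inl ((hTree n i).2.1 t ht)
    obtain ⟨Bb, hBb, htBb⟩ := exists_branch_through {t} hchain
    obtain ⟨bb, hbbBr, hbbSub, hbbCof⟩ := (hKnspec n i).2.2 Bb hBb
    obtain ⟨y, hybb, hty⟩ := hbbCof t (htBb rfl)
    obtain ⟨y', hy'bb, hy'⟩ := cut_branch_unbounded hT₀ hg hord _ bb hbbBr (max γ y)
    have hymax := le_max_right γ y
    have hyy' : (p n).r i y y' := by
      rcases hbbBr.1.2 y hybb y' hy'bb with h | h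
      · exact (((hKnspec n i).2.1 y y').mp h).1
      · exfalso
        have := hT₀.2.2.2.2.2 y' y h.1
        omega
    exact ⟨y', (hbbBr.1.1 hy'bb).1, lt_of_le_of_lt (le_max_left _ _) hy',
      n, (hTree n i).2.2.2.1 t y y' hty hyy'⟩
  -- maximality tool for branches of the fused tree
  have hins : ∀ i B, IsBranch (fusionU p Z i) (fusionR p Z i) B →
      ∀ z, z ∈ fusionU p Z i → (∀ w ∈ B, fusionR p Z i z w ∨ fusionR p Z i w z) →
      z ∈ B := by
    intro i B hB z hz hcomp
    have hchain : IsChainIn (fusionU p Z i) (fusionR p Z i) (insert z B) := by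
      constructor
      · intro x hx
        rcases Set.mem_insert_iff.mp hx with hxz | hxB
        · rw [hxz]; exact hz
        · exact hB.1.1 hxB
      · intro x hx y hy
        rcases Set.mem_insert_iff.mp hx with hxz | hxB
        · rcases Set.mem_insert_iff.mp hy with hyz | hyB
          · rw [hxz, hyz]
            exact Or.inl ((hqtree i).2.1 z hz)
          · rw [hxz]; exact hcomp y hyB
        · rcases Set.mem_insert_iff.mp hy with hyz | hyB
          · rw [hyz]
            rcases hcomp x hxB with h | h
            · exact Or.inr h
            · exact Or.inl h
          · exact hB.1.2 x hxB y hyB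
    have heq := hB.2 _ hchain (Set.subset_insert z B)
    exact heq ▸ Set.mem_insert z B
  -- branches are downward closed
  have hdown : ∀ i B, IsBranch (fusionU p Z i) (fusionR p Z i) B →
      ∀ z y, y ∈ B → fusionR p Z i z y → z ∈ B := by
    intro i B hB z y hyB hzy
    refine hins i B hB z hzy.1 ?_
    intro w hw
    rcases hB.1.2 w hw y hyB with h | h
    · rcases hRb_linear i z w y hzy.2.2 h.2.2 with h' | h'
      · exact Or.inl ⟨hzy.1, h.1, h'⟩
      · exact Or.inr ⟨h.1, hzy.1, h'⟩
    · exact Or.inl ⟨hzy.1, h.2.1, hRb_trans i z y w hzy.2.2 h.2.2⟩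
  -- branches are unbounded
  have hunb : ∀ i B, IsBranch (fusionU p Z i) (fusionR p Z i) B →
      ∀ β : ℕ, ∃ b ∈ B, β < b := by
    intro i B hB β
    by_contra hcon
    push_neg at hcon
    rcases B.eq_empty_or_nonempty with hBe | hBne
    · obtain ⟨t0, ht0T, -⟩ := hg.2.2 (Set.mem_univ ([] : List Bool))
      obtain ⟨w0, hw0T, -, hw0⟩ := t0_extend hg hord t0 ht0T (Kf i)
      have hw0U : w0 ∈ fusionU p Z i := hT₀U i w0 hw0T hw0
      have hw0B : w0 ∈ B := by
        refine hins i B hB w0 hw0U ?_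
        intro w hw
        rw [hBe] at hw
        exact absurd hw (Set.notMem_empty w)
      rw [hBe] at hw0B
      exact absurd hw0B (Set.notMem_empty w0)
    · obtain ⟨t, htB, hmax⟩ := Set.Finite.exists_maximalFor id B
        ((Set.finite_Iic β).subset (fun y hy => hcon y hy)) hBne
      have htop : ∀ y ∈ B, fusionR p Z i y t := by
        intro y hy
        rcases hB.1.2 y hy t htB with h | h
        · exact h
        · have hty : t = y := le_antisymm (hRb_le i t y h.2.2) (hmax hy (hRb_le i t y h.2.2))
          rw [← hty]
          exact (hqtree i).2.1 t (hB.1.1 htB)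
      obtain ⟨nt, hntZ, htpart⟩ := hB.1.1 htB
      have httree : t ∈ (p nt).T i := hpart_tree nt i htpart
      obtain ⟨w, hwT, hw, hRtw⟩ := hEXT nt i t httree (max β (Kf i))
      have hwU : w ∈ fusionU p Z i := hT₀U i w hwT (lt_of_le_of_lt (le_max_right _ _) hw)
      have hwB : w ∈ B := by
        refine hins i B hB w hwU ?_
        intro w' hw'
        exact Or.inr ⟨hB.1.1 hw', hwU, hRb_trans i w' t w (htop w' hw').2.2 hRtw⟩
      have h1 := hcon w hwB
      have h2 := le_max_left β (Kf i)
      omega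
  -- MAIN: every branch of the fused tree meets T₀ cofinally
  have hMain : ∀ i B, IsBranch (fusionU p Z i) (fusionR p Z i) B →
      ∀ θ : ℕ, ∃ w, w ∈ B ∧ w ∈ T₀ ∧ θ < w := by
    intro i B hB θ
    by_contra hcon
    push_neg at hcon
    set Θ := max θ (Kf i) with hΘ
    have hθΘ : θ ≤ Θ := le_max_left _ _
    have hKfΘ : Kf i ≤ Θ := le_max_right _ _
    have hGfin : (T₀ ∩ g ⁻¹' {l : List Bool | l.length ≤ Θ + 1}).Finite := by
      refine Set.Finite.of_finite_image ?_ (hg.2.1.mono Set.inter_subset_left)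
      exact (finite_boolLists (Θ + 1)).subset (Set.image_subset_iff.mpr (fun x hx => hx.2))
    obtain ⟨βG, hβG⟩ := hGfin.bddAbove
    obtain ⟨b, hbB, hb⟩ := hunb i B hB (max Θ βG)
    have hΘb : Θ < b := lt_of_le_of_lt (le_max_left _ _) hb
    have hβGb : βG < b := lt_of_le_of_lt (le_max_right _ _) hb
    have hbT₀ : b ∉ T₀ := by
      intro hbT
      have := hcon b hbB hbT
      omega
    obtain ⟨n_b, hn_bZ, hbpart⟩ := hB.1.1 hbB
    have hbtree : b ∈ (p n_b).T i := hpart_tree n_b i hbpart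
    have hWne : ∃ w, w ∈ T₀ ∧ ∃ m, (p m).r i b w := by
      obtain ⟨w, hwT, -, hRw⟩ := hEXT n_b i b hbtree 0
      exact ⟨w, hwT, hRw⟩
    set ws := Nat.find hWne with hwsdef
    have hws : ws ∈ T₀ ∧ ∃ m, (p m).r i b ws := Nat.find_spec hWne
    have hwsmin : ∀ v, (v ∈ T₀ ∧ ∃ m, (p m).r i b v) → ws ≤ v :=
      fun v hv => Nat.find_min' hWne hv
    have hblt : b < ws := by
      have h1 := hRb_le i b ws hws.2
      rcases lt_or_eq_of_le h1 with h | h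
      · exact h
      · exact absurd (h ▸ hws.1) hbT₀
    have hKnKf : Kn nh i ≤ Kf i := le_max_left _ _
    have hpred : ∀ v, v ∈ T₀ → r₀ v ws → v ≠ ws → v ≤ Θ := by
      intro v hvT hvws hvne
      by_contra hvΘ
      push_neg at hvΘ
      have hvKn : Kn nh i < v := by omega
      have hwsKn : Kn nh i < ws := by omega
      have hRvws : ∃ m, (p m).r i v ws :=
        ⟨nh, (htransf i v ws hvT hws.1 hvKn hwsKn).mp hvws⟩
      rcases hRb_linear i b v ws hws.2 hRvws with h | h
      · have h1 := hwsmin v ⟨hvT, h⟩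
        have h2 := hRb_le i v ws hRvws
        exact hvne (le_antisymm h2 h1)
      · have hvU : v ∈ fusionU p Z i := hT₀U i v hvT (by omega)
        have hvB : v ∈ B := hdown i B hB v b hbB ⟨hvU, hB.1.1 hbB, h⟩
        have := hcon v hvB hvT
        omega
    have hlen : (g ws).length ≤ Θ + 1 := by
      by_contra hLc
      push_neg at hLc
      have hsurj : ∀ σ : List Bool, ∃ v ∈ T₀, g v = σ := fun σ => hg.2.2 (Set.mem_univ σ)
      choose vf hvfT hvfg using hsurj
      have key : ∀ k : ℕ, k ≤ Θ + 1 → vf ((g ws).take k) ≤ Θ := by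
        intro k hk
        have hgv := hvfg ((g ws).take k)
        have hvT := hvfT ((g ws).take k)
        have hklen : k < (g ws).length := by omega
        have hvne : vf ((g ws).take k) ≠ ws := by
          intro h
          have h1 := congrArg List.length hgv
          rw [h, List.length_take] at h1
          omega
        have hpre : g (vf ((g ws).take k)) <+: g ws := by
          rw [hgv]
          exact List.take_prefix k (g ws)
        exact hpred _ hvT ((hord _ hvT ws hws.1).mpr hpre) hvne
      have hinj : Function.Injective
          (fun k : Fin (Θ + 2) => vf ((g ws).take (k : ℕ))) := by
        intro k k' h
        have h1 := hvfg ((g ws).take (k : ℕ))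
        rw [show vf ((g ws).take (k : ℕ)) = vf ((g ws).take (k' : ℕ)) from h] at h1
        have h2 := (h1.symm.trans (hvfg ((g ws).take (k' : ℕ)))).symm
        have h3 := congrArg List.length h2
        rw [List.length_take, List.length_take] at h3
        have hk := k.isLt
        have hk' := k'.isLt
        apply Fin.ext
        omega
      have hφinj : Function.Injective
          (fun k : Fin (Θ + 2) => (⟨vf ((g ws).take (k : ℕ)),
            Finset.mem_Iic.mpr (key (k : ℕ) (Nat.lt_succ_iff.mp k.isLt))⟩ :
            Finset.Iic Θ)) := by
        intro a b hab
        exact hinj (congrArg Subtype.val hab)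
      have hcard := Fintype.card_le_of_injective _ hφinj
      rw [Fintype.card_fin, Fintype.card_coe, Nat.card_Iic] at hcard
      omega
    have hwsβG : ws ≤ βG := hβG ⟨hws.1, hlen⟩
    omega
  -- cofinality into any set containing a tail of T₀
  have hcof : ∀ i B, IsBranch (fusionU p Z i) (fusionR p Z i) B →
      ∀ (S : Set ℕ) (γ : ℕ), (∀ w, w ∈ T₀ → γ < w → w ∈ S) →
      ∀ x ∈ B, ∃ y, y ∈ B ∧ y ∈ S ∧ fusionR p Z i x y := by
    intro i B hB S γ hγ x hx
    obtain ⟨w, hwB, hwT, hw⟩ := hMain i B hB (max γ x)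
    have h1 := le_max_left γ x
    have h2 := le_max_right γ x
    refine ⟨w, hwB, hγ w hwT (by omega), ?_⟩
    rcases hB.1.2 x hx w hwB with h | h
    · exact h
    · exfalso
      have := hRb_le i w x h.2.2
      omega
  -- the TreeLe factory
  have hTLmk : ∀ i (S : Set ℕ) (rS : ℕ → ℕ → Prop),
      S ⊆ fusionU p Z i →
      (∀ x y, rS x y ↔ (fusionR p Z i x y ∧ x ∈ S ∧ y ∈ S)) →
      (∃ γ : ℕ, ∀ w, w ∈ T₀ → γ < w → w ∈ S) →
      TreeLe (fusionU p Z i) (fusionR p Z i) S rS := by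
    rintro i S rS hSU h2 ⟨γ, hγ⟩
    refine ⟨hSU, fun x y => h2 x y, ?_⟩
    intro B hB
    refine ⟨B ∩ S, ⟨⟨Set.inter_subset_right, ?_⟩, ?_⟩, Set.inter_subset_left, ?_⟩
    · rintro x ⟨hxB, hxS⟩ y ⟨hyB, hyS⟩
      rcases hB.1.2 x hxB y hyB with h | h
      · exact Or.inl ((h2 x y).mpr ⟨h, hxS, hyS⟩)
      · exact Or.inr ((h2 y x).mpr ⟨h, hyS, hxS⟩)
    · intro C hC hsub
      refine Set.Subset.antisymm ?_ hsub
      intro z hzC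
      have hzS : z ∈ S := hC.1 hzC
      have hzB : z ∈ B := by
        refine hins i B hB z (hSU hzS) ?_
        intro w hwB
        obtain ⟨y, hyB, hyS, hwy⟩ := hcof i B hB S γ hγ w hwB
        have hyC : y ∈ C := hsub ⟨hyB, hyS⟩
        rcases hC.2 z hzC y hyC with h | h
        · have hzy := ((h2 z y).mp h).1
          rcases hRb_linear i z w y hzy.2.2 hwy.2.2 with h' | h'
          · exact Or.inl ⟨hSU hzS, hB.1.1 hwB, h'⟩
          · exact Or.inr ⟨hB.1.1 hwB, hSU hzS, h'⟩
        · have hyz := ((h2 y z).mp h).1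
          exact Or.inr ⟨hB.1.1 hwB, hSU hzS, hRb_trans i w y z hwy.2.2 hyz.2.2⟩
      exact ⟨hzB, hzS⟩
    · intro x hx
      obtain ⟨y, hyB, hyS, hxy⟩ := hcof i B hB S γ hγ x hx
      exact ⟨y, ⟨hyB, hyS⟩, hxy⟩
  -- validity TreeLe to a cut of T₀
  have hval3 : ∀ i, TreeLe (fusionU p Z i) (fusionR p Z i) (treeCut T₀ (Kf i))
      (restrictRel r₀ (treeCut T₀ (Kf i))) := by
    intro i
    have hKnKf : Kn nh i ≤ Kf i := le_max_left _ _
    refine hTLmk i _ _ ?_ ?_ ⟨Kf i, fun w hwT hw => ⟨hwT, hw⟩⟩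
    · intro w hw
      exact hT₀U i w hw.1 hw.2
    · intro x y
      constructor
      · rintro ⟨hr, hx, hy⟩
        have hx2 : Kf i < x := hx.2
        have hy2 : Kf i < y := hy.2
        exact ⟨⟨hT₀U i x hx.1 hx.2, hT₀U i y hy.1 hy.2,
          nh, (htransf i x y hx.1 hy.1 (by omega) (by omega)).mp hr⟩, hx, hy⟩
      · rintro ⟨⟨hxU, hyU, hRb⟩, hx, hy⟩
        have hx2 : Kf i < x := hx.2
        have hy2 : Kf i < y := hy.2
        have hxKn : Kn nh i < x := by omega
        have hyKn : Kn nh i < y := by omega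
        have hxT : x ∈ (p nh).T i := (hKnspec nh i).1 ⟨hx.1, hxKn⟩
        have hyT : y ∈ (p nh).T i := (hKnspec nh i).1 ⟨hy.1, hyKn⟩
        exact ⟨(htransf i x y hx.1 hy.1 hxKn hyKn).mpr
          (hRb_restrict i nh x y hRb hxT hyT), hx, hy⟩
  -- the ordering conclusion
  have hle : ∀ n, n ∈ Z → QCond.le (fusionQ p Z) ((p n).res n) := by
    intro n hnZ i
    constructor
    · refine hTLmk i (((p n).res n).T i) (((p n).res n).r i) ?_ ?_ ?_
      · intro x hx
        exact ⟨n, hnZ, hx⟩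
      · intro x y
        by_cases hi : i < n
        · have hrS : (((p n).res n).r i) =
              restrictRel ((p n).r i) (treeCut ((p n).T i) n) := by
            show (if i < n then restrictRel ((p n).r i) (treeCut ((p n).T i) n)
              else (p n).r i) = _
            rw [if_pos hi]
          have hTS : (((p n).res n).T i) = treeCut ((p n).T i) n := by
            show (if i < n then treeCut ((p n).T i) n else (p n).T i) = _
            rw [if_pos hi]
          rw [hrS, hTS]
          constructor
          · rintro ⟨hr, hx, hy⟩
            have hxp : x ∈ fusionPart p n i := by
              rw [hpart_def, if_pos hi]; exact hx
            have hyp : y ∈ fusionPart p n i := by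
              rw [hpart_def, if_pos hi]; exact hy
            exact ⟨⟨⟨n, hnZ, hxp⟩, ⟨n, hnZ, hyp⟩, n, hr⟩, hx, hy⟩
          · rintro ⟨⟨hxU, hyU, hRb⟩, hx, hy⟩
            exact ⟨hRb_restrict i n x y hRb hx.1 hy.1, hx, hy⟩
        · have hrS : (((p n).res n).r i) = (p n).r i := by
            show (if i < n then restrictRel ((p n).r i) (treeCut ((p n).T i) n)
              else (p n).r i) = _
            rw [if_neg hi]
          have hTS : (((p n).res n).T i) = (p n).T i := by
            show (if i < n then treeCut ((p n).T i) n else (p n).T i) = _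
            rw [if_neg hi]
          rw [hrS, hTS]
          constructor
          · intro hr
            have hmem := (hTree n i).1 x y hr
            have hxp : x ∈ fusionPart p n i := by
              rw [hpart_def, if_neg hi]; exact hmem.1
            have hyp : y ∈ fusionPart p n i := by
              rw [hpart_def, if_neg hi]; exact hmem.2
            exact ⟨⟨⟨n, hnZ, hxp⟩, ⟨n, hnZ, hyp⟩, n, hr⟩, hmem.1, hmem.2⟩
          · rintro ⟨⟨hxU, hyU, hRb⟩, hx, hy⟩
            exact hRb_restrict i n x y hRb hx hy
      · exact ⟨max (Kn n i) n, fun w hwT hw => hT₀part n i w hwT hw⟩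
    · intro j hj
      have hjpart : j ∈ fusionPart p n i := hj
      have hjU : ∃ n', n' ∈ Z ∧ j ∈ fusionPart p n' i := ⟨n, hnZ, hjpart⟩
      have hjtree : j ∈ (p n).T i := hpart_tree n i hjpart
      have hqf : (fusionQ p Z).f i j = (p hjU.choose).f i j := by
        show fusionF p Z i j = _
        unfold fusionF
        rw [dif_pos hjU]
      have hctree : j ∈ (p hjU.choose).T i := hpart_tree _ i hjU.choose_spec.2
      have hagree : (p hjU.choose).f i j = (p n).f i j := by
        rcases le_total hjU.choose n with h | h
        · exact (hmonoF i hjU.choose n h j hctree).symm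
        · exact hmonoF i n hjU.choose h j hjtree
      have hresf : ((p n).res n).f i j = (p n).f i j := by
        show (if i < n ∧ j ≤ n then none else (p n).f i j) = (p n).f i j
        rw [if_neg]
        rintro ⟨hi, hjn⟩
        rw [hpart_def, if_pos hi] at hjpart
        have h2 : n < j := hjpart.2
        omega
      rw [hresf, hqf, hagree]
  -- assemble
  refine ⟨fusionQ p Z, ?_, Z, hZinf, fun n hnZ => hle n hnZ⟩
  intro i
  refine ⟨hqtree i, ?_, ⟨Kf i, hval3 i⟩, ?_⟩
  · have hsub : fusionU p Z i ⊆ (p i).T i ∪ ⋃ n ∈ Z, A n := by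
      rintro x ⟨n, hnZ, hx⟩
      by_cases hi : i < n
      · right
        refine Set.mem_biUnion hnZ ?_
        rw [hpart_def, if_pos hi] at hx
        simp only [hA]
        exact Set.mem_biUnion hi hx
      · left
        rw [hpart_def, if_neg hi] at hx
        exact hmonoT i n i (le_of_not_gt hi) hx
    refine Filter.mem_of_superset
      (Filter.inter_mem ((hvalid i i).2.1) hZsmall) ?_
    rw [← Set.compl_union]
    exact Set.compl_subset_compl.mpr hsub
  · intro j
    show (fusionF p Z i j).isSome ↔ j ∈ fusionU p Z i
    unfold fusionF
    split
    · rename_i h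
      rw [(hvalid h.choose i).2.2.2 j]
      exact ⟨fun _ => h, fun _ => hpart_tree _ i h.choose_spec.2⟩
    · rename_i h
      simp only [Option.isSome_none, Bool.false_eq_true, false_iff]
      exact h
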